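/- Differential privacy of one-shot perturbation: Consider the Laplacian consensus dynamics with S = I_n (all s_i = 1) and noise injected only at time k = 0, i.e., θ(k+1) = θ(k) − h L x(k) + S η(k), x(k) = θ(k) + η(k), where η_i(0) ~ Lap(c_i) with c_i > 0 independent across agents and η(k) = 0 for all k ≥ 1, and 0 < h < 1/d_max. Then for each i ∈ {1,…,n} this algorithm preserves ε_i-differential privacy of agent i's initial state with ε_i = δ/c_i: for every pair of initial states differing only in coordinate i by at most δ and every Borel set O ⊆ (ℝⁿ)^ℕ, P{η : X_{θ₀⁽¹⁾}(η) ∈ O} ≤ e^{δ/c_i} · P{η : X_{θ₀⁽²⁾}(η) ∈ O}. -/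

import Mathlib

open MeasureTheory ProbabilityTheory Filter

/-- The Laplace distribution on `ℝ` with scale `b`, given by the density
`x ↦ (1/(2b)) exp(-|x|/b)` with respect to Lebesgue measure. -/
noncomputable def lap (b : ℝ) : Measure ℝ :=
  volume.withDensity fun x => ENNReal.ofReal ((2 * b)⁻¹ * Real.exp (-|x| / b))

/-- The state trajectory of the dynamics `θ(k+1) = θ(k) - h L x(k) + S η(k)` with
messages `x(k) = θ(k) + η(k)`, initial state `θ0` and noise sequence `η`. -/
noncomputable def thetaSeq {n : ℕ} (L S : Matrix (Fin n) (Fin n) ℝ) (h : ℝ)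
    (θ0 : Fin n → ℝ) (η : ℕ → Fin n → ℝ) : ℕ → Fin n → ℝ
  | 0 => θ0
  | k + 1 =>
      thetaSeq L S h θ0 η k - h • L.mulVec (thetaSeq L S h θ0 η k + η k)
        + S.mulVec (η k)

/-- The map `X_{θ₀}` sending a noise sequence `η` to the resulting sequence of
transmitted messages `x(k) = θ(k) + η(k)`. -/
noncomputable def msgSeq {n : ℕ} (L S : Matrix (Fin n) (Fin n) ℝ) (h : ℝ)
    (θ0 : Fin n → ℝ) (η : ℕ → Fin n → ℝ) : ℕ → Fin n → ℝ :=
  fun k => thetaSeq L S h θ0 η k + η k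

open scoped ENNReal


lemma lintegral_pi_prod : ∀ {n : ℕ} (μ : Fin n → Measure ℝ), (∀ i, SigmaFinite (μ i)) →
    ∀ (f : Fin n → ℝ → ℝ≥0∞), (∀ i, Measurable (f i)) →
    ∫⁻ x : Fin n → ℝ, ∏ i, f i (x i) ∂(Measure.pi μ) = ∏ i, ∫⁻ y, f i y ∂(μ i) := by
  intro n
  induction n with
  | zero =>
      intro μ _ f _
      simp [Measure.pi_univ]
  | succ n ih =>
      intro μ hσ f hf
      haveI := hσ
      have hmp := measurePreserving_piFinSuccAbove μ 0
      have h1 : ∫⁻ z : ℝ × (Fin n → ℝ), f 0 z.1 * ∏ j : Fin n, f j.succ (z.2 j)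
            ∂((μ 0).prod (Measure.pi fun j => μ ((0 : Fin (n+1)).succAbove j)))
          = ∫⁻ x : Fin (n+1) → ℝ, ∏ i, f i (x i) ∂(Measure.pi μ) := by
        rw [hmp.lintegral_map_equiv]
        refine lintegral_congr fun x => ?_
        simp [MeasurableEquiv.piFinSuccAbove, Fin.prod_univ_succ, Fin.zero_succAbove, Fin.tail]
      rw [← h1]
      have h2 := lintegral_prod_mul (μ := μ 0)
        (ν := Measure.pi fun j => μ ((0 : Fin (n+1)).succAbove j)) (f := f 0)
        (g := fun y : Fin n → ℝ => ∏ j : Fin n, f j.succ (y j)) (hf 0).aemeasurable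
        ((Finset.measurable_prod _ fun j _ => (hf j.succ).comp (measurable_pi_apply j)).aemeasurable)
      refine h2.trans ?_
      rw [ih _ (fun j => hσ _) _ (fun j => hf j.succ), Fin.prod_univ_succ]
      simp [Fin.zero_succAbove]

lemma withDensity_pi_eq {n : ℕ} (f : Fin n → ℝ → ℝ≥0∞) (hf : ∀ i, Measurable (f i))
    (hσ : ∀ i, SigmaFinite ((volume : Measure ℝ).withDensity (f i))) :
    Measure.pi (fun i => (volume : Measure ℝ).withDensity (f i))
      = (volume : Measure (Fin n → ℝ)).withDensity (fun v => ∏ i, f i (v i)) := by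
  haveI := hσ
  refine Measure.pi_eq fun s hs => ?_
  rw [withDensity_apply _ (MeasurableSet.univ_pi hs),
    ← lintegral_indicator (MeasurableSet.univ_pi hs) _]
  have hkey : ∀ v : Fin n → ℝ,
      (Set.univ.pi s).indicator (fun v => ∏ i, f i (v i)) v
        = ∏ i, (s i).indicator (f i) (v i) := by
    intro v
    by_cases hv : v ∈ Set.univ.pi s
    · rw [Set.indicator_of_mem hv]
      exact Finset.prod_congr rfl fun i _ =>
        (Set.indicator_of_mem (hv i (Set.mem_univ i)) _).symm
    · rw [Set.indicator_of_notMem hv]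
      rw [Set.mem_univ_pi] at hv
      push_neg at hv
      obtain ⟨i, hi⟩ := hv
      exact (Finset.prod_eq_zero (Finset.mem_univ i) (Set.indicator_of_notMem hi _)).symm
  simp_rw [hkey]
  rw [volume_pi, lintegral_pi_prod _ (fun _ => inferInstance) _
    (fun i => (hf i).indicator (hs i))]
  exact Finset.prod_congr rfl fun i _ => by
    rw [lintegral_indicator (hs i), withDensity_apply _ (hs i)]

noncomputable def iterM {n : ℕ} (L : Matrix (Fin n) (Fin n) ℝ) (h : ℝ) :
    ℕ → (Fin n → ℝ) → (Fin n → ℝ)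
  | 0, v => v
  | k + 1, v => iterM L h k v - h • L.mulVec (iterM L h k v)

lemma measurable_mulVec {n : ℕ} (M : Matrix (Fin n) (Fin n) ℝ) :
    Measurable fun v : Fin n → ℝ => M.mulVec v := by
  refine measurable_pi_lambda _ fun i => ?_
  simpa [Matrix.mulVec, dotProduct] using
    Finset.measurable_sum Finset.univ fun j _ => (measurable_pi_apply (X := fun _ : Fin n => ℝ) j).const_mul (M i j)

lemma measurable_iterM {n : ℕ} (L : Matrix (Fin n) (Fin n) ℝ) (h : ℝ) (k : ℕ) :
    Measurable (iterM L h k) := by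
  induction k with
  | zero => exact measurable_id
  | succ k ih => exact ih.sub (((measurable_mulVec L).comp ih).const_smul h)

lemma msg_eq_iterM {n : ℕ} (L : Matrix (Fin n) (Fin n) ℝ) (h : ℝ)
    (θ : Fin n → ℝ) (η : ℕ → Fin n → ℝ) (hη : ∀ k, 1 ≤ k → η k = 0) :
    ∀ k, msgSeq L 1 h θ η k = iterM L h k (θ + η 0) := by
  intro k
  induction k with
  | zero => simp [msgSeq, thetaSeq, iterM]
  | succ k ih =>
      have hη1 : η (k + 1) = 0 := hη (k + 1) (Nat.le_add_left 1 k)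
      have hθs : thetaSeq L 1 h θ η (k+1) =
          msgSeq L 1 h θ η k - h • L.mulVec (msgSeq L 1 h θ η k) := by
        show thetaSeq L 1 h θ η k - h • L.mulVec (thetaSeq L 1 h θ η k + η k)
            + (1 : Matrix (Fin n) (Fin n) ℝ).mulVec (η k) = _
        rw [Matrix.one_mulVec]
        show _ = thetaSeq L 1 h θ η k + η k - h • L.mulVec (thetaSeq L 1 h θ η k + η k)
        abel
      show thetaSeq L 1 h θ η (k+1) + η (k+1) = _
      rw [hη1, add_zero, hθs, ih]
      rfl

noncomputable def lapDen (b : ℝ) : ℝ → ℝ≥0∞ :=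
  fun x => ENNReal.ofReal ((2 * b)⁻¹ * Real.exp (-|x| / b))

lemma lapDen_measurable (b : ℝ) : Measurable (lapDen b) :=
  ((measurable_id.abs.neg.div_const b).exp.const_mul _).ennreal_ofReal

lemma lap_eq_withDensity (b : ℝ) : lap b = volume.withDensity (lapDen b) := rfl

noncomputable def prodDen {n : ℕ} (c : Fin n → ℝ) : (Fin n → ℝ) → ℝ≥0∞ :=
  fun v => ∏ i, lapDen (c i) (v i)

lemma prodDen_measurable {n : ℕ} (c : Fin n → ℝ) : Measurable (prodDen c) :=
  Finset.measurable_prod _ fun i _ => (lapDen_measurable (c i)).comp (measurable_pi_apply i)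


/-- **Differential privacy of one-shot perturbation**: with `S = I_n`, noise
`η_i(0) ~ Lap(c_i)` independent across agents and `η(k) = 0` for `k ≥ 1`, the
algorithm preserves `ε_i`-differential privacy of agent `i`'s initial state with
`ε_i = δ / c_i`. -/
theorem one_shot_differential_privacy {n : ℕ} (hn : 0 < n)
    (A : Matrix (Fin n) (Fin n) ℝ) (hAsymm : A.IsSymm) (hApos : ∀ i j, 0 ≤ A i j)
    (L : Matrix (Fin n) (Fin n) ℝ)
    (hL : L = Matrix.diagonal (fun i => ∑ j, A i j) - A)
    (hconn : ∀ v : Fin n → ℝ, L.mulVec v = 0 → ∃ a : ℝ, v = fun _ => a)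
    (h : ℝ) (hh0 : 0 < h)
    (hh1 : h < 1 / Finset.univ.sup'
      (Finset.univ_nonempty_iff.mpr (Fin.pos_iff_nonempty.mp hn)) (fun i => ∑ j, A i j))
    (c : Fin n → ℝ) (hc : ∀ i, 0 < c i)
    (P : Measure (ℕ → Fin n → ℝ)) [IsProbabilityMeasure P]
    (hlaw0 : ∀ i : Fin n,
      Measure.map (fun ω : ℕ → Fin n → ℝ => ω 0 i) P = lap (c i))
    (hzero : ∀ k : ℕ, 1 ≤ k →
      Measure.map (fun ω : ℕ → Fin n → ℝ => ω k) P = Measure.dirac 0)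
    (hind : iIndepFun
      (fun i (ω : ℕ → Fin n → ℝ) => ω 0 i) P)
    (δ : ℝ) (hδ : 0 < δ) :
    ∀ i0 : Fin n, ∀ θ1 θ2 : Fin n → ℝ,
      (∀ i, i ≠ i0 → θ2 i = θ1 i) → |θ2 i0 - θ1 i0| ≤ δ →
      ∀ O : Set (ℕ → Fin n → ℝ), MeasurableSet O →
        P {η | msgSeq L 1 h θ1 η ∈ O}
          ≤ ENNReal.ofReal (Real.exp (δ / c i0)) *
            P {η | msgSeq L 1 h θ2 η ∈ O} := by
  intro i0 θ1 θ2 hθ hdiff O hO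
  classical
  have hmeas0i : ∀ i : Fin n, Measurable fun ω : ℕ → Fin n → ℝ => ω 0 i :=
    fun i => (measurable_pi_apply i).comp (measurable_pi_apply 0)
  set G : (Fin n → ℝ) → ℕ → Fin n → ℝ := fun v k => iterM L h k v with hG_def
  have hGmeas : Measurable G := measurable_pi_lambda _ fun k => measurable_iterM L h k
  have hlapprob : ∀ i, IsProbabilityMeasure (lap (c i)) := by
    intro i
    rw [← hlaw0 i]
    exact Measure.isProbabilityMeasure_map (hmeas0i i).aemeasurable
  haveI := hlapprob
  have hσ : ∀ i : Fin n, SigmaFinite (lap (c i)) := fun i => inferInstance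
  -- the law of η(0) is the product of Laplace measures, i.e. has the product density
  have hmap : Measure.map (fun ω : ℕ → Fin n → ℝ => ω 0) P
      = (volume : Measure (Fin n → ℝ)).withDensity (prodDen c) := by
    have h1 : Measure.pi (fun i => lap (c i))
        = Measure.map (fun ω : ℕ → Fin n → ℝ => ω 0) P := by
      haveI := hσ
      refine Measure.pi_eq fun s hs => ?_
      have hps : MeasurableSet (Set.univ.pi s) := MeasurableSet.univ_pi hs
      rw [Measure.map_apply (measurable_pi_apply 0) hps]
      have hpre : (fun ω : ℕ → Fin n → ℝ => ω 0) ⁻¹' Set.univ.pi s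
          = ⋂ i, (fun ω : ℕ → Fin n → ℝ => ω 0 i) ⁻¹' s i := by
        ext ω; simp [Set.mem_univ_pi]
      rw [hpre]
      have h2 := hind.measure_inter_preimage_eq_mul Finset.univ (fun i _ => hs i)
      have h3 : ⋂ i ∈ Finset.univ, ((fun ω : ℕ → Fin n → ℝ => ω 0 i) ⁻¹' s i)
          = ⋂ i, ((fun ω : ℕ → Fin n → ℝ => ω 0 i) ⁻¹' s i) := by simp
      rw [h3] at h2
      rw [h2]
      refine Finset.prod_congr rfl fun i _ => ?_
      rw [← hlaw0 i, Measure.map_apply (hmeas0i i) (hs i)]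
    have h3 : Measure.pi (fun i => lap (c i))
        = (volume : Measure (Fin n → ℝ)).withDensity (prodDen c) :=
      withDensity_pi_eq (fun i => lapDen (c i)) (fun i => lapDen_measurable (c i))
        (fun i => hσ i)
    rw [← h1, h3]
  -- almost surely, all noises after time 0 vanish
  have hgood : ∀ᵐ ω ∂P, ∀ k, 1 ≤ k → ω k = 0 := by
    rw [ae_all_iff]
    intro k
    by_cases hk : 1 ≤ k
    · have hm : Measurable fun ω : ℕ → Fin n → ℝ => ω k := measurable_pi_apply k
      have h0 : P {ω : ℕ → Fin n → ℝ | ¬(1 ≤ k → ω k = 0)} = 0 := by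
        have hset : {ω : ℕ → Fin n → ℝ | ¬(1 ≤ k → ω k = 0)}
            = (fun ω : ℕ → Fin n → ℝ => ω k) ⁻¹' ({0}ᶜ) := by
          ext ω; simp [hk]
        rw [hset, ← Measure.map_apply hm (measurableSet_singleton 0).compl, hzero k hk]
        simp
      exact ae_iff.2 h0
    · exact Filter.Eventually.of_forall fun ω hk' => absurd hk' hk
  -- key identity for the measure of the message event
  have key : ∀ θ : Fin n → ℝ,
      P {η | msgSeq L 1 h θ η ∈ O} = ∫⁻ w in G ⁻¹' O, prodDen c (w - θ) ∂(volume) := by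
    intro θ
    have hBmeas : MeasurableSet ((fun v : Fin n → ℝ => θ + v) ⁻¹' (G ⁻¹' O)) :=
      (measurable_const.add measurable_id) (hGmeas hO)
    have hEset : {η : ℕ → Fin n → ℝ | msgSeq L 1 h θ η ∈ O}
        =ᵐ[P] ((fun ω : ℕ → Fin n → ℝ => ω 0) ⁻¹'
          ((fun v : Fin n → ℝ => θ + v) ⁻¹' (G ⁻¹' O))) := by
      rw [Filter.eventuallyEq_set]
      filter_upwards [hgood] with ω hω
      simp only [Set.mem_setOf_eq, Set.mem_preimage]
      rw [show msgSeq L 1 h θ ω = G (θ + ω 0) from funext (msg_eq_iterM L h θ ω hω)]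
    rw [measure_congr hEset, ← Measure.map_apply (measurable_pi_apply 0) hBmeas, hmap,
      withDensity_apply _ hBmeas, ← lintegral_indicator hBmeas]
    have hkey : ∀ v, ((fun v : Fin n → ℝ => θ + v) ⁻¹' (G ⁻¹' O)).indicator (prodDen c) v
        = (G ⁻¹' O).indicator (fun w => prodDen c (w - θ)) (θ + v) := by
      intro v
      by_cases hv : θ + v ∈ G ⁻¹' O
      · have hv' : v ∈ (fun v : Fin n → ℝ => θ + v) ⁻¹' (G ⁻¹' O) := hv
        rw [Set.indicator_of_mem hv', Set.indicator_of_mem hv, add_sub_cancel_left]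
      · have hv' : v ∉ (fun v : Fin n → ℝ => θ + v) ⁻¹' (G ⁻¹' O) := hv
        rw [Set.indicator_of_notMem hv', Set.indicator_of_notMem hv]
    simp_rw [hkey]
    rw [lintegral_add_left_eq_self ((G ⁻¹' O).indicator fun w => prodDen c (w - θ)) θ,
      lintegral_indicator (hGmeas hO)]
  -- pointwise density comparison
  have hpt : ∀ w : Fin n → ℝ,
      prodDen c (w - θ1) ≤ ENNReal.ofReal (Real.exp (δ / c i0)) * prodDen c (w - θ2) := by
    intro w
    have hsplit : ∀ θ : Fin n → ℝ, prodDen c (w - θ)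
        = lapDen (c i0) (w i0 - θ i0)
          * ∏ i ∈ Finset.univ.erase i0, lapDen (c i) (w i - θ i) := by
      intro θ
      show (∏ i, lapDen (c i) ((w - θ) i)) = _
      simp only [Pi.sub_apply]
      exact (Finset.mul_prod_erase Finset.univ _ (Finset.mem_univ i0)).symm
    rw [hsplit θ1, hsplit θ2, ← mul_assoc]
    have hprod_eq : ∏ i ∈ Finset.univ.erase i0, lapDen (c i) (w i - θ1 i)
        = ∏ i ∈ Finset.univ.erase i0, lapDen (c i) (w i - θ2 i) :=
      Finset.prod_congr rfl fun i hi => by rw [hθ i (Finset.ne_of_mem_erase hi)]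
    rw [hprod_eq]
    refine mul_le_mul' ?_ le_rfl
    show ENNReal.ofReal ((2 * c i0)⁻¹ * Real.exp (-|w i0 - θ1 i0| / c i0))
        ≤ ENNReal.ofReal (Real.exp (δ / c i0))
          * ENNReal.ofReal ((2 * c i0)⁻¹ * Real.exp (-|w i0 - θ2 i0| / c i0))
    rw [← ENNReal.ofReal_mul (Real.exp_nonneg _)]
    apply ENNReal.ofReal_le_ofReal
    have hc0 := hc i0
    have habs : |w i0 - θ2 i0| - |w i0 - θ1 i0| ≤ δ := by
      have h1 := abs_sub_abs_le_abs_sub (w i0 - θ2 i0) (w i0 - θ1 i0)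
      have h2 : (w i0 - θ2 i0) - (w i0 - θ1 i0) = -(θ2 i0 - θ1 i0) := by ring
      rw [h2, abs_neg] at h1
      linarith
    have hexp : Real.exp (-|w i0 - θ1 i0| / c i0)
        ≤ Real.exp (δ / c i0) * Real.exp (-|w i0 - θ2 i0| / c i0) := by
      rw [← Real.exp_add, ← add_div]
      apply Real.exp_le_exp.2
      apply (div_le_div_iff_of_pos_right hc0).2
      linarith
    calc (2 * c i0)⁻¹ * Real.exp (-|w i0 - θ1 i0| / c i0)
        ≤ (2 * c i0)⁻¹ * (Real.exp (δ / c i0) * Real.exp (-|w i0 - θ2 i0| / c i0)) := by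
          apply mul_le_mul_of_nonneg_left hexp (by positivity)
      _ = Real.exp (δ / c i0) * ((2 * c i0)⁻¹ * Real.exp (-|w i0 - θ2 i0| / c i0)) := by ring
  rw [key θ1, key θ2]
  calc ∫⁻ w in G ⁻¹' O, prodDen c (w - θ1) ∂volume
      ≤ ∫⁻ w in G ⁻¹' O, ENNReal.ofReal (Real.exp (δ / c i0)) * prodDen c (w - θ2) ∂volume :=
        lintegral_mono fun w => hpt w
    _ = ENNReal.ofReal (Real.exp (δ / c i0)) * ∫⁻ w in G ⁻¹' O, prodDen c (w - θ2) ∂volume :=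
        lintegral_const_mul _ ((prodDen_measurable c).comp (measurable_id.sub measurable_const))
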